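/- Let Γ be a linearly ordered, cancellative, additive commutative monoid and let R be a ring. If the Hahn series ring HahnSeries(Γ, R) is a right Archimedean domain, then R is a right Archimedean domain. -/

import Mathlib

/-- A ring `R` is *right Archimedean* if for every nonunit `a ∈ R`,
`⋂ n, R·aⁿ = {0}`. -/
def RightArchimedean (R : Type*) [Ring R] : Prop :=
  ∀ a : R, ¬ IsUnit a → (⋂ n : ℕ, {x : R | ∃ r : R, x = r * a ^ n}) = {0}

/-- If the Hahn series ring `HahnSeries Γ R` is a right Archimedean domain, then `R`
is a right Archimedean domain. -/
theorem rightArchimedean_domain_of_hahnSeries (Γ : Type*)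
    [AddCommMonoid Γ] [LinearOrder Γ] [IsOrderedCancelAddMonoid Γ] (R : Type*) [Ring R]
    (hdom : IsDomain (HahnSeries Γ R)) (harch : RightArchimedean (HahnSeries Γ R)) :
    IsDomain R ∧ RightArchimedean R := by
  have hCinj : Function.Injective (HahnSeries.C : R → HahnSeries Γ R) :=
    HahnSeries.C_injective
  -- R is nontrivial
  have hnt : Nontrivial R := by
    refine ⟨⟨0, 1, fun h => ?_⟩⟩
    have : (0 : HahnSeries Γ R) = 1 := by
      rw [← HahnSeries.C_zero, ← HahnSeries.C_one, h]
    exact zero_ne_one this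
  have hdomR : IsDomain R := by
    refine { exists_pair_ne := hnt.exists_pair_ne,
             mul_left_cancel_of_ne_zero := ?_, mul_right_cancel_of_ne_zero := ?_ }
    · intro a ha b c (h : a * b = a * c)
      have hC : (HahnSeries.C a : HahnSeries Γ R) * HahnSeries.C b =
          HahnSeries.C a * HahnSeries.C c := by
        rw [← map_mul, ← map_mul, h]
      have hCa : (HahnSeries.C a : HahnSeries Γ R) ≠ 0 := by
        rw [← HahnSeries.C_zero]; exact fun hc => ha (hCinj hc)
      exact hCinj (mul_left_cancel₀ hCa hC)
    · intro b hb a c (h : a * b = c * b)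
      have hC : (HahnSeries.C a : HahnSeries Γ R) * HahnSeries.C b =
          HahnSeries.C c * HahnSeries.C b := by
        rw [← map_mul, ← map_mul, h]
      have hCb : (HahnSeries.C b : HahnSeries Γ R) ≠ 0 := by
        rw [← HahnSeries.C_zero]; exact fun hc => hb (hCinj hc)
      exact hCinj (mul_right_cancel₀ hCb hC)
  haveI := hdomR
  refine ⟨hdomR, ?_⟩
  intro a ha
  -- C a is not a unit
  have hCa : ¬ IsUnit (HahnSeries.C a : HahnSeries Γ R) := by
    intro h
    obtain ⟨u, hu⟩ := h
    have hui : (u : HahnSeries Γ R) * ↑u⁻¹ = 1 := u.mul_inv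
    have hiu : (↑u⁻¹ : HahnSeries Γ R) * ↑u = 1 := u.inv_mul
    have ha0 : a ≠ 0 := by
      rintro rfl
      rw [HahnSeries.C_zero] at hu
      rw [hu, zero_mul] at hui
      exact zero_ne_one hui
    have hune : (u : HahnSeries Γ R) ≠ 0 := left_ne_zero_of_mul_eq_one hui
    have hine : (↑u⁻¹ : HahnSeries Γ R) ≠ 0 := right_ne_zero_of_mul_eq_one hui
    have hord : (u : HahnSeries Γ R).order + (↑u⁻¹ : HahnSeries Γ R).order = 0 := by
      rw [← HahnSeries.order_mul hune hine, hui, HahnSeries.order_one]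
    have hordu : (u : HahnSeries Γ R).order = 0 := by rw [hu]; exact HahnSeries.order_C
    have hordi : (↑u⁻¹ : HahnSeries Γ R).order = 0 := by
      rwa [hordu, zero_add] at hord
    have h1 := HahnSeries.coeff_mul_order_add_order (u : HahnSeries Γ R) (↑u⁻¹ : HahnSeries Γ R)
    have h2 := HahnSeries.coeff_mul_order_add_order (↑u⁻¹ : HahnSeries Γ R) (u : HahnSeries Γ R)
    rw [hui, hordu, hordi, add_zero, HahnSeries.coeff_one, if_pos rfl] at h1
    rw [hiu, hordu, hordi, add_zero, HahnSeries.coeff_one, if_pos rfl] at h2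
    have hlc : (u : HahnSeries Γ R).leadingCoeff = a := by
      rw [hu, HahnSeries.leadingCoeff_eq, HahnSeries.order_C]
      simp [HahnSeries.C_apply]
    rw [hlc] at h1 h2
    exact ha ⟨⟨a, (↑u⁻¹ : HahnSeries Γ R).leadingCoeff, h1.symm, h2.symm⟩, rfl⟩
  have key := harch (HahnSeries.C a) hCa
  ext x
  simp only [Set.mem_iInter, Set.mem_setOf_eq, Set.mem_singleton_iff]
  constructor
  · intro hx
    have : (HahnSeries.C x : HahnSeries Γ R) ∈
        ⋂ n : ℕ, {z : HahnSeries Γ R | ∃ r, z = r * (HahnSeries.C a) ^ n} := by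
      simp only [Set.mem_iInter, Set.mem_setOf_eq]
      intro n
      obtain ⟨r, hr⟩ := hx n
      exact ⟨HahnSeries.C r, by rw [hr, map_mul, map_pow]⟩
    rw [key, Set.mem_singleton_iff] at this
    apply hCinj
    rw [this, HahnSeries.C_zero]
  · rintro rfl
    exact fun n => ⟨0, by rw [zero_mul]⟩
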